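/- Let z_nm ∈ ℂ be a transmission zero of the square transfer matrix G0 with left (output) zero direction y, i.e. y^H G0(z_nm) = 0 with y ≠ 0. If Cd = G0^{-1} Td (I - Td)^{-1} is the ideal controller and the closed loop with Cd is internally stable with |z_nm| > 1, then necessarily y^H Td(z_nm) = 0. -/

import Mathlib

open Polynomial

/-- Evaluation of a rational matrix at a point (entrywise `RatFunc.eval`). -/
noncomputable def evalMat {n : ℕ} (M : Matrix (Fin n) (Fin n) (RatFunc ℂ)) (z : ℂ) :
    Matrix (Fin n) (Fin n) ℂ :=
  Matrix.of fun i j => RatFunc.eval (RingHom.id ℂ) z (M i j)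

/-- A rational matrix is stable when every entry has all its poles strictly inside
the unit circle, i.e. the (reduced) denominator of every entry has no root of
modulus `≥ 1`. -/
def MatStable {n : ℕ} (M : Matrix (Fin n) (Fin n) (RatFunc ℂ)) : Prop :=
  ∀ i j, ∀ w : ℂ, 1 ≤ ‖w‖ → (RatFunc.denom (M i j)).eval w ≠ 0

lemma eval_ne_of_dvd {p q : Polynomial ℂ} {z : ℂ} (h : p ∣ q) (hq : q.eval z ≠ 0) :
    p.eval z ≠ 0 := by
  obtain ⟨c, rfl⟩ := h
  simp only [Polynomial.eval_mul] at hq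
  exact fun h0 => hq (by rw [h0, zero_mul])

lemma eval2_eq_eval (p : Polynomial ℂ) (z : ℂ) :
    Polynomial.eval₂ (RingHom.id ℂ) z p = p.eval z := by
  rfl

lemma eval_sum_ok {ι : Type*} (z : ℂ) (s : Finset ι) (f : ι → RatFunc ℂ)
    (h : ∀ k ∈ s, ((f k).denom).eval z ≠ 0) :
    ((∑ k ∈ s, f k).denom).eval z ≠ 0 ∧
      RatFunc.eval (RingHom.id ℂ) z (∑ k ∈ s, f k) =
        ∑ k ∈ s, RatFunc.eval (RingHom.id ℂ) z (f k) := by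
  classical
  induction s using Finset.induction with
  | empty => simp
  | insert a s hnotmem ih =>
    have ha : ((f a).denom).eval z ≠ 0 := h a (Finset.mem_insert_self a s)
    have hrest := ih fun k hk => h k (Finset.mem_insert_of_mem hk)
    have hdenom : ((f a + ∑ k ∈ s, f k).denom).eval z ≠ 0 := by
      refine eval_ne_of_dvd (RatFunc.denom_add_dvd _ _) ?_
      simp only [Polynomial.eval_mul]
      exact mul_ne_zero ha hrest.1
    constructor
    · rw [Finset.sum_insert hnotmem]; exact hdenom
    · rw [Finset.sum_insert hnotmem, Finset.sum_insert hnotmem,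
        RatFunc.eval_add (RingHom.id ℂ) z ha hrest.1, hrest.2]

theorem stmt_3 {n : ℕ} (G0 Td : Matrix (Fin n) (Fin n) (RatFunc ℂ))
    (hG0 : IsUnit G0) (hTd : IsUnit (1 - Td))
    (Cd : Matrix (Fin n) (Fin n) (RatFunc ℂ))
    (hCd : Cd = G0⁻¹ * Td * (1 - Td)⁻¹)
    (hU : IsUnit (1 + G0 * Cd))
    (hstab1 : MatStable ((1 + G0 * Cd)⁻¹))
    (hstab2 : MatStable ((1 + G0 * Cd)⁻¹ * G0))
    (hstab3 : MatStable (Cd * (1 + G0 * Cd)⁻¹))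
    (hstab4 : MatStable (Cd * (1 + G0 * Cd)⁻¹ * G0))
    (znm : ℂ) (hz : 1 < ‖znm‖)
    (y : Fin n → ℂ) (hy : y ≠ 0)
    (hnopole : ∀ i j, (RatFunc.denom (G0 i j)).eval znm ≠ 0)
    (hzero : Matrix.vecMul (star y) (evalMat G0 znm) = 0) :
    Matrix.vecMul (star y) (evalMat Td znm) = 0 := by
  have hdG : IsUnit G0.det := (Matrix.isUnit_iff_isUnit_det _).mp hG0
  have hdT : IsUnit (1 - Td).det := (Matrix.isUnit_iff_isUnit_det _).mp hTd
  have hGG : G0 * G0⁻¹ = 1 := Matrix.mul_nonsing_inv _ hdG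
  have hGC : G0 * Cd = Td * (1 - Td)⁻¹ := by
    rw [hCd, ← Matrix.mul_assoc, ← Matrix.mul_assoc, hGG, Matrix.one_mul]
  have hsum : (1 : Matrix (Fin n) (Fin n) (RatFunc ℂ)) + G0 * Cd = (1 - Td)⁻¹ := by
    rw [hGC]
    have h1 : (1 : Matrix (Fin n) (Fin n) (RatFunc ℂ)) = (1 - Td) * (1 - Td)⁻¹ :=
      (Matrix.mul_nonsing_inv _ hdT).symm
    calc (1 : Matrix (Fin n) (Fin n) (RatFunc ℂ)) + Td * (1 - Td)⁻¹
        = (1 - Td) * (1 - Td)⁻¹ + Td * (1 - Td)⁻¹ := by rw [← h1]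
      _ = ((1 - Td) + Td) * (1 - Td)⁻¹ := by rw [add_mul]
      _ = (1 - Td)⁻¹ := by rw [sub_add_cancel, Matrix.one_mul]
  have hinv : ((1 : Matrix (Fin n) (Fin n) (RatFunc ℂ)) + G0 * Cd)⁻¹ = 1 - Td := by
    rw [hsum, Matrix.nonsing_inv_nonsing_inv _ hdT]
  have hM3 : Cd * (1 + G0 * Cd)⁻¹ = G0⁻¹ * Td := by
    rw [hinv, hCd, Matrix.mul_assoc, Matrix.mul_assoc,
      Matrix.nonsing_inv_mul _ hdT, Matrix.mul_one]
  rw [hM3] at hstab3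
  set M := G0⁻¹ * Td with hMdef
  have hMok : ∀ i j, ((M i j).denom).eval znm ≠ 0 := fun i j => hstab3 i j znm hz.le
  have hTdM : Td = G0 * M := by
    rw [hMdef, ← Matrix.mul_assoc, hGG, Matrix.one_mul]
  have hmat : evalMat Td znm = evalMat G0 znm * evalMat M znm := by
    ext i j
    have hterm : ∀ k ∈ (Finset.univ : Finset (Fin n)),
        ((G0 i k * M k j).denom).eval znm ≠ 0 := by
      intro k _
      refine eval_ne_of_dvd (RatFunc.denom_mul_dvd _ _) ?_
      simp only [Polynomial.eval_mul]
      exact mul_ne_zero (hnopole i k) (hMok k j)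
    have h1 := (eval_sum_ok znm Finset.univ (fun k => G0 i k * M k j) hterm).2
    have h2 : Td i j = ∑ k ∈ Finset.univ, G0 i k * M k j := by
      rw [hTdM]; rfl
    show RatFunc.eval (RingHom.id ℂ) znm (Td i j) = _
    rw [h2, h1]
    refine Finset.sum_congr rfl fun k _ => ?_
    rw [RatFunc.eval_mul (RingHom.id ℂ) znm (hnopole i k) (hMok k j)]
    rfl
  rw [hmat, ← Matrix.vecMul_vecMul, hzero, Matrix.zero_vecMul]
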